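/- For every n ≥ 6, X_{n−1} < Σ_{j=2}^{n−2} (j−1)·X_j·X_{n−j} < 2·X_{n−1}. -/

import Mathlib

/-- The sequence `X_n` counting equivalence classes of circular planar electrical networks:
`X_1 = 1` and, for `n ≥ 2`,
`X_n = 2(n-1) X_{n-1} + ∑_{j=2}^{n-2} (j-1) X_j X_{n-j}` (the sum being empty for `n ≤ 3`;
here it is written over the attached index set to establish termination). -/
def X : ℕ → ℕ
  | 0 => 1
  | 1 => 1
  | n + 2 =>
      2 * (n + 1) * X (n + 1) +
        ∑ j ∈ (Finset.Icc 2 n).attach, (j.1 - 1) * X j.1 * X (n + 2 - j.1)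
decreasing_by
  · exact Nat.lt_succ_self (n + 1)
  · have := j.2; rw [Finset.mem_Icc] at this; omega
  · have := j.2; rw [Finset.mem_Icc] at this; omega

def S (n : ℕ) : ℕ := ∑ j ∈ Finset.Icc 2 (n - 2), (j - 1) * X j * X (n - j)

lemma X_rec (n : ℕ) : X (n + 2) = 2 * (n + 1) * X (n + 1) + S (n + 2) := by
  have h : S (n + 2) = ∑ j ∈ Finset.Icc 2 n, (j - 1) * X j * X (n + 2 - j) := by
    rw [S, show n + 2 - 2 = n from rfl]
  rw [X, h]
  congr 1
  exact Finset.sum_attach (Finset.Icc 2 n) (fun j => (j - 1) * X j * X (n + 2 - j))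

lemma X0 : X 0 = 1 := by rw [X]
lemma X1 : X 1 = 1 := by rw [X]
lemma X2 : X 2 = 2 := by rw [X_rec 0]; simp [S, X1]
lemma X3 : X 3 = 8 := by rw [X_rec 1]; simp [S, X2]
lemma S4 : S 4 = 4 := by simp [S, Finset.Icc_self, X2]
lemma X4 : X 4 = 52 := by rw [X_rec 2, S4, X3]
lemma S5 : S 5 = 48 := by
  have h : Finset.Icc 2 3 = {2, 3} := by decide
  simp [S, h, X2, X3]
lemma X5 : X 5 = 464 := by rw [X_rec 3, S5, X4]

lemma X_pos : ∀ n, 1 ≤ X n := by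
  intro n
  induction n using Nat.strong_induction_on with
  | _ n ih =>
    match n with
    | 0 => rw [X0]
    | 1 => rw [X1]
    | m + 2 =>
      rw [X_rec]
      have h := ih (m + 1) (by omega)
      have h2 : 1 * 1 ≤ 2 * (m + 1) * X (m + 1) :=
        Nat.mul_le_mul (by omega) h
      linarith

lemma ratio_lo (m : ℕ) : 2 * (m + 1) * X (m + 1) ≤ X (m + 2) := by
  rw [X_rec]; exact Nat.le_add_right _ _

lemma X_quad (m : ℕ) (hm : 2 ≤ m) : 4 * X m ≤ X (m + 1) := by
  obtain ⟨k, rfl⟩ : ∃ k, m = k + 2 := ⟨m - 2, by omega⟩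
  have h : 2 * (k + 2) * X (k + 2) ≤ X (k + 3) := ratio_lo (k + 1)
  have h2 : 4 * X (k + 2) ≤ 2 * (k + 2) * X (k + 2) :=
    Nat.mul_le_mul_right _ (by omega)
  exact le_trans h2 h
lemma S_bot (a : ℕ) : S (a + 5) =
    2 * X (a + 3) + ∑ j ∈ Finset.Icc 3 (a + 3), (j - 1) * X j * X (a + 5 - j) := by
  have h2 : (2 : ℕ) ∈ Finset.Icc 2 (a + 3) := by simp
  rw [S, show a + 5 - 2 = a + 3 from by omega,
    ← Finset.add_sum_erase _ _ h2, Finset.Icc_erase_left, ← Finset.Icc_add_one_left_eq_Ioc,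
    show a + 5 - 2 = a + 3 from by omega, X2, show 2 + 1 = 3 from rfl]

lemma S_split6 (a : ℕ) : S (a + 6) =
    2 * (a + 4) * X (a + 4) + ∑ j ∈ Finset.Icc 3 (a + 3), (j - 1) * X j * X (a + 6 - j) := by
  have h2 : (2 : ℕ) ∈ Finset.Icc 2 (a + 4) := by simp
  rw [S, show a + 6 - 2 = a + 4 from by omega,
    ← Finset.add_sum_erase _ _ h2, Finset.Icc_erase_left, ← Finset.Icc_add_one_left_eq_Ioc,
    show 2 + 1 = 3 from rfl,
    show a + 4 = (a + 3) + 1 from rfl,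
    Finset.sum_Icc_succ_top (by omega)]
  rw [show a + 6 - 2 = a + 4 from by omega, show a + 3 + 1 = a + 4 from rfl,
    show a + 6 - (a + 4) = 2 from by omega, show a + 4 - 1 = a + 3 from by omega, X2]
  ring

lemma T_lb (a : ℕ) : 2 * (a + 2) * X (a + 3) ≤
    ∑ j ∈ Finset.Icc 3 (a + 3), (j - 1) * X j * X (a + 5 - j) := by
  have hmem : a + 3 ∈ Finset.Icc 3 (a + 3) := by simp
  have h := Finset.single_le_sum
    (f := fun j => (j - 1) * X j * X (a + 5 - j)) (fun i _ => Nat.zero_le _) hmem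
  rw [show a + 3 - 1 = a + 2 from by omega, show a + 5 - (a + 3) = 2 from by omega, X2] at h
  calc 2 * (a + 2) * X (a + 3) = (a + 2) * X (a + 3) * 2 := by ring
    _ ≤ _ := h

lemma lower (a : ℕ) : X (a + 5) < S (a + 6) := by
  have hX5 : X (a + 5) = 2 * (a + 4) * X (a + 4) + S (a + 5) := X_rec (a + 3)
  rw [S_bot] at hX5
  rw [S_split6]
  set T := ∑ j ∈ Finset.Icc 3 (a + 3), (j - 1) * X j * X (a + 5 - j) with hT
  have hM : 4 * T ≤ ∑ j ∈ Finset.Icc 3 (a + 3), (j - 1) * X j * X (a + 6 - j) := by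
    rw [hT, Finset.mul_sum]
    apply Finset.sum_le_sum
    intro j hj
    rw [Finset.mem_Icc] at hj
    have h1 : a + 6 - j = (a + 5 - j) + 1 := by omega
    have h2 : 2 ≤ a + 5 - j := by omega
    rw [h1]
    calc 4 * ((j - 1) * X j * X (a + 5 - j)) = (j - 1) * X j * (4 * X (a + 5 - j)) := by ring
      _ ≤ (j - 1) * X j * X (a + 5 - j + 1) := Nat.mul_le_mul_left _ (X_quad _ h2)
  have hTlb : 2 * (a + 2) * X (a + 3) ≤ T := T_lb a
  have hX3 : 1 ≤ X (a + 3) := X_pos _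
  have h4 : 4 * X (a + 3) ≤ 2 * (a + 2) * X (a + 3) := Nat.mul_le_mul_right _ (by omega)
  linarith

lemma ratio_up_of (n : ℕ) (IH : ∀ m, m < n → S m ≤ 2 * X (m - 1)) (m : ℕ)
    (h : m + 1 < n) : X (m + 1) ≤ 2 * (m + 1) * X m := by
  match m with
  | 0 => rw [X1, X0]; norm_num
  | k + 1 =>
    have hr : X (k + 2) = 2 * (k + 1) * X (k + 1) + S (k + 2) := X_rec k
    have h2 : S (k + 2) ≤ 2 * X (k + 1) := IH (k + 2) h
    have h3 : 2 * (k + 2) * X (k + 1) = 2 * (k + 1) * X (k + 1) + 2 * X (k + 1) := by ring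
    linarith

lemma tri : ∀ b : ℕ, 2 * (∑ j ∈ Finset.Icc 3 (b + 3), (j - 1)) + 2 = (b + 2) * (b + 3) := by
  intro b
  induction b with
  | zero => decide
  | succ b ih =>
    rw [show b + 1 + 3 = (b + 3) + 1 from rfl, Finset.sum_Icc_succ_top (by omega)]
    have h : b + 3 + 1 - 1 = b + 3 := by omega
    rw [h]
    nlinarith [ih]

lemma step (a : ℕ) (IH : ∀ m, m < a + 6 → S m ≤ 2 * X (m - 1)) :
    S (a + 6) < 2 * X (a + 5) := by
  have Hup : ∀ m, m + 1 < a + 6 → X (m + 1) ≤ 2 * (m + 1) * X m := ratio_up_of _ IH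
  -- chained product bound
  have key : ∀ k, 2 * (k + 3) ≤ a + 6 → X (k + 3) * X (a + 6 - (k + 3)) ≤ 8 * X (a + 3) := by
    intro k
    induction k with
    | zero =>
      intro _
      rw [show a + 6 - 3 = a + 3 from by omega, X3]
    | succ k ih =>
      intro hk
      have hk' : 2 * (k + 3) ≤ a + 6 := by omega
      have h1 : X (k + 4) ≤ 2 * (k + 4) * X (k + 3) := Hup (k + 3) (by omega)
      have h2 : 2 * (a + 2 - k) * X (a + 2 - k) ≤ X (a + 3 - k) := by
        obtain ⟨m, hm⟩ : ∃ m, a + 3 - k = m + 2 := ⟨a + 1 - k, by omega⟩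
        rw [hm, show a + 2 - k = m + 1 from by omega]
        exact ratio_lo m
      have e1 : a + 6 - (k + 1 + 3) = a + 2 - k := by omega
      have e2 : a + 6 - (k + 3) = a + 3 - k := by omega
      rw [e1] at *
      rw [e2] at ih
      have hmain : 2 * (a + 2 - k) * (X (k + 4) * X (a + 2 - k)) ≤
          2 * (a + 2 - k) * (X (k + 3) * X (a + 3 - k)) := by
        calc 2 * (a + 2 - k) * (X (k + 4) * X (a + 2 - k))
            = X (k + 4) * (2 * (a + 2 - k) * X (a + 2 - k)) := by ring
          _ ≤ (2 * (k + 4) * X (k + 3)) * X (a + 3 - k) := Nat.mul_le_mul h1 h2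
          _ = 2 * (k + 4) * (X (k + 3) * X (a + 3 - k)) := by ring
          _ ≤ 2 * (a + 2 - k) * (X (k + 3) * X (a + 3 - k)) :=
              Nat.mul_le_mul_right _ (by omega)
      have hcancel : X (k + 4) * X (a + 2 - k) ≤ X (k + 3) * X (a + 3 - k) :=
        Nat.le_of_mul_le_mul_left hmain (by omega)
      exact le_trans (by exact_mod_cast hcancel) (ih hk')
  -- per-term bound on the middle sum
  have bound : ∀ j ∈ Finset.Icc 3 (a + 3),
      (j - 1) * X j * X (a + 6 - j) ≤ (j - 1) * (8 * X (a + 3)) := by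
    intro j hj
    rw [Finset.mem_Icc] at hj
    have hprod : X j * X (a + 6 - j) ≤ 8 * X (a + 3) := by
      rcases le_or_gt (2 * j) (a + 6) with h | h
      · obtain ⟨k, rfl⟩ : ∃ k, j = k + 3 := ⟨j - 3, by omega⟩
        exact key k (by omega)
      · obtain ⟨k, hk⟩ : ∃ k, a + 6 - j = k + 3 := ⟨a + 3 - j, by omega⟩
        have h2 : a + 6 - (k + 3) = j := by omega
        have := key k (by omega)
        rw [h2] at this
        rw [hk, mul_comm]
        exact this
    calc (j - 1) * X j * X (a + 6 - j) = (j - 1) * (X j * X (a + 6 - j)) := by ring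
      _ ≤ (j - 1) * (8 * X (a + 3)) := Nat.mul_le_mul_left _ hprod
  set M := ∑ j ∈ Finset.Icc 3 (a + 3), (j - 1) * X j * X (a + 6 - j) with hMdef
  have hM : M ≤ (∑ j ∈ Finset.Icc 3 (a + 3), (j - 1)) * (8 * X (a + 3)) := by
    rw [hMdef, Finset.sum_mul]
    exact Finset.sum_le_sum bound
  set Sg := ∑ j ∈ Finset.Icc 3 (a + 3), (j - 1) with hSg
  have htri : 2 * Sg + 2 = (a + 2) * (a + 3) := tri a
  have hr : 2 * (a + 3) * X (a + 3) ≤ X (a + 4) := ratio_lo (a + 2)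
  have hX3 : 1 ≤ X (a + 3) := X_pos _
  -- M < 2*(a+4)*X(a+4)
  have hMlt : M < 2 * (a + 4) * X (a + 4) := by
    have c1 : 2 * M ≤ (2 * Sg) * (8 * X (a + 3)) := by
      calc 2 * M ≤ 2 * (Sg * (8 * X (a + 3))) := by
            exact Nat.mul_le_mul_left _ hM
        _ = (2 * Sg) * (8 * X (a + 3)) := by ring
    have c2 : (2 * Sg) * (8 * X (a + 3)) < (2 * Sg + 2) * (8 * X (a + 3)) :=
      mul_lt_mul_of_pos_right (by omega) (by positivity)
    have c3 : (2 * Sg + 2) * (8 * X (a + 3)) ≤ ((a + 3) * (a + 4)) * (8 * X (a + 3)) := by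
      rw [htri]
      exact Nat.mul_le_mul_right _ (Nat.mul_le_mul (by omega) (by omega))
    have c4 : ((a + 3) * (a + 4)) * (8 * X (a + 3)) = 4 * (a + 4) * (2 * (a + 3) * X (a + 3)) := by
      ring
    have c5 : 4 * (a + 4) * (2 * (a + 3) * X (a + 3)) ≤ 4 * (a + 4) * X (a + 4) :=
      Nat.mul_le_mul_left _ hr
    have : 2 * M < 2 * (2 * (a + 4) * X (a + 4)) := by
      calc 2 * M ≤ (2 * Sg) * (8 * X (a + 3)) := c1
        _ < (2 * Sg + 2) * (8 * X (a + 3)) := c2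
        _ ≤ ((a + 3) * (a + 4)) * (8 * X (a + 3)) := c3
        _ = 4 * (a + 4) * (2 * (a + 3) * X (a + 3)) := c4
        _ ≤ 4 * (a + 4) * X (a + 4) := c5
        _ = 2 * (2 * (a + 4) * X (a + 4)) := by ring
    omega
  have hS6 : S (a + 6) = 2 * (a + 4) * X (a + 4) + M := S_split6 a
  have hX5 : X (a + 5) = 2 * (a + 4) * X (a + 4) + S (a + 5) := X_rec (a + 3)
  linarith

lemma upper_aux : ∀ n, S n ≤ 2 * X (n - 1) := by
  intro n
  induction n using Nat.strong_induction_on with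
  | _ n ih =>
    rcases lt_or_ge n 6 with h | h
    · interval_cases n
      · simp [S]
      · simp [S]
      · simp [S]
      · rw [S, show 3 - 2 = 1 from rfl, Finset.Icc_eq_empty (by omega), Finset.sum_empty]
        exact Nat.zero_le _
      · rw [S4, show 4 - 1 = 3 from rfl, X3]; norm_num
      · rw [S5, show 5 - 1 = 4 from rfl, X4]; norm_num
    · obtain ⟨a, rfl⟩ : ∃ a, n = a + 6 := ⟨n - 6, by omega⟩
      exact (step a (fun m hm => ih m hm)).le

/-- For every `n ≥ 6`,
`X_{n-1} < ∑_{j=2}^{n-2} (j-1) X_j X_{n-j} < 2 X_{n-1}`. -/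
theorem sum_bounds (n : ℕ) (hn : 6 ≤ n) :
    X (n - 1) < ∑ j ∈ Finset.Icc 2 (n - 2), (j - 1) * X j * X (n - j) ∧
      ∑ j ∈ Finset.Icc 2 (n - 2), (j - 1) * X j * X (n - j) < 2 * X (n - 1) := by
  obtain ⟨a, rfl⟩ : ∃ a, n = a + 6 := ⟨n - 6, by omega⟩
  constructor
  · exact lower a
  · exact step a (fun m _ => upper_aux m)
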